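/- Uniqueness for 3D phase unwrapping (Theorem on phase unwrapping, algebraic core): Let κ > 0 and let f, g ∈ O_n both satisfy the 3D Itoh condition for κ. Let T be a finite set of directions containing the n directions (1,α_l,β_l), l = 1,…,n, where the family (α_l,β_l) satisfies the diversity condition, together with the direction (0,1,γ0) for some real γ0 with |γ0| < 1 (the y-line projection with slopes (0,γ0)) and the direction (0,0,1) (the z-line projection with slopes (0,0)). Suppose that (a) exp(iκ·g_t(m)) = exp(iκ·f_t(m)) for every t ∈ T and every m ∈ Z_p², and (b) the difference g_t - f_t, as a function on Z_p², is the same for every t ∈ T. Then g = f. -/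

import Mathlib

open Complex MeasureTheory ProbabilityTheory BigOperators

noncomputable section

namespace Tomo3D

/-- `Z_m`: the integers in `[-(m-1)/2, (m-1)/2]` (for odd `m`). -/
def Zf (m : ℕ) : Finset ℤ :=
  Finset.Icc (-(((m : ℤ) - 1) / 2)) (((m : ℤ) - 1) / 2)

/-- `Z_m²`. -/
def Zf2 (m : ℕ) : Finset (ℤ × ℤ) := Zf m ×ˢ Zf m

/-- The `p`-periodic Dirichlet kernel `D_p`. -/
def Dk (p : ℕ) (t : ℝ) : ℂ :=
  (p : ℂ)⁻¹ * ∑ l ∈ Zf p,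
    Complex.exp (2 * (Real.pi : ℂ) * Complex.I * (l : ℂ) * (t : ℂ) / (p : ℂ))

/-- The class `O_n`: objects supported in `Z_n³`. -/
def IsObj (n : ℕ) (f : ℤ → ℤ → ℤ → ℂ) : Prop :=
  ∀ i j k : ℤ, i ∉ Zf n ∨ j ∉ Zf n ∨ k ∉ Zf n → f i j k = 0

/-- Continuous interpolation `f̃` of an object. -/
def interp (n : ℕ) (f : ℤ → ℤ → ℤ → ℂ) (x y z : ℝ) : ℂ :=
  ∑ i ∈ Zf n, ∑ j ∈ Zf n, ∑ k ∈ Zf n,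
    f i j k * Dk (2 * n - 1) (x - (i : ℝ)) * Dk (2 * n - 1) (y - (j : ℝ)) *
      Dk (2 * n - 1) (z - (k : ℝ))

/-- Directions `(1,α,β)`, `(α,1,β)`, `(α,β,1)`. -/
inductive Dir
  | dx (α β : ℝ)
  | dy (α β : ℝ)
  | dz (α β : ℝ)

/-- Validity of a direction: the slopes satisfy `|α| < 1`, `|β| < 1`. -/
def Dir.valid : Dir → Prop
  | .dx α β => |α| < 1 ∧ |β| < 1
  | .dy α β => |α| < 1 ∧ |β| < 1
  | .dz α β => |α| < 1 ∧ |β| < 1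

/-- The vector in `ℝ³` attached to a direction. -/
def Dir.toVec : Dir → ℝ × ℝ × ℝ
  | .dx α β => (1, α, β)
  | .dy α β => (α, 1, β)
  | .dz α β => (α, β, 1)

/-- Two directions are parallel if one is a real scalar multiple of the other. -/
def Dir.Parallel (t t' : Dir) : Prop :=
  ∃ c : ℝ, t'.toVec = c • t.toVec ∨ t.toVec = c • t'.toVec

/-- Discrete projection of an object along a direction, regarded as a function on
`Z_{2n-1}²` extended by zero to `ℤ²`. -/
def proj (n : ℕ) (f : ℤ → ℤ → ℤ → ℂ) : Dir → ℤ × ℤ → ℂ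
  | .dx α β => fun c =>
      if c ∈ Zf2 (2 * n - 1) then
        ∑ i ∈ Zf n, interp n f (i : ℝ) (α * (i : ℝ) + (c.1 : ℝ)) (β * (i : ℝ) + (c.2 : ℝ))
      else 0
  | .dy α β => fun c =>
      if c ∈ Zf2 (2 * n - 1) then
        ∑ j ∈ Zf n, interp n f (α * (j : ℝ) + (c.1 : ℝ)) (j : ℝ) (β * (j : ℝ) + (c.2 : ℝ))
      else 0
  | .dz α β => fun c =>
      if c ∈ Zf2 (2 * n - 1) then
        ∑ k ∈ Zf n, interp n f (α * (k : ℝ) + (c.1 : ℝ)) (β * (k : ℝ) + (c.2 : ℝ)) (k : ℝ)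
      else 0

/-- 3D discrete Fourier transform of an object (defined for all real frequencies). -/
def ft3 (n : ℕ) (f : ℤ → ℤ → ℤ → ℂ) (ξ η ζ : ℝ) : ℂ :=
  ∑ i ∈ Zf n, ∑ j ∈ Zf n, ∑ k ∈ Zf n,
    f i j k *
      Complex.exp (-(2 * (Real.pi : ℂ) * Complex.I) *
        ((ξ : ℂ) * (i : ℂ) + (η : ℂ) * (j : ℂ) + (ζ : ℂ) * (k : ℂ)) /
          (((2 * n - 1 : ℕ) : ℂ)))

/-- 2D discrete Fourier transform of a projection (defined for all real frequencies). -/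
def ft2 (n : ℕ) (g : ℤ × ℤ → ℂ) (η ζ : ℝ) : ℂ :=
  ∑ c ∈ Zf2 (2 * n - 1),
    g c *
      Complex.exp (-(2 * (Real.pi : ℂ) * Complex.I) *
        ((η : ℂ) * (c.1 : ℂ) + (ζ : ℂ) * (c.2 : ℂ)) / (((2 * n - 1 : ℕ) : ℂ)))

/-- Diffraction pattern of `h : Z_p² → ℂ`. -/
def dpat (p : ℕ) (h : ℤ × ℤ → ℂ) (w : ℝ × ℝ) : ℝ :=
  ‖∑ m ∈ Zf2 p,
      h m * Complex.exp (-(2 * (Real.pi : ℂ) * Complex.I) *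
        ((m.1 : ℂ) * (w.1 : ℂ) + (m.2 : ℂ) * (w.2 : ℂ)))‖ ^ 2

/-- `h₁` and `h₂` produce the same diffraction pattern (on `[-1/2,1/2]²`). -/
def SameDP (p : ℕ) (h₁ h₂ : ℤ × ℤ → ℂ) : Prop :=
  ∀ w : ℝ × ℝ, w.1 ∈ Set.Icc (-(1 : ℝ) / 2) (1 / 2) →
    w.2 ∈ Set.Icc (-(1 : ℝ) / 2) (1 / 2) → dpat p h₁ w = dpat p h₂ w

/-- Autocorrelation of `h : ℤ² → ℂ`. -/
def autocorr (h : ℤ × ℤ → ℂ) (m : ℤ × ℤ) : ℂ :=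
  ∑' m' : ℤ × ℤ, h (m' + m) * (starRingEnd ℂ) (h m')

/-- The random phase mask `μ(m) = exp(i φ(m))`. -/
def mask {Ω : Type*} (φ : ℤ × ℤ → Ω → ℝ) (ω : Ω) (m : ℤ × ℤ) : ℂ :=
  Complex.exp (Complex.I * ((φ m ω : ℝ) : ℂ))

/-- The Mask Assumption: the phases `φ(m)`, `m ∈ Z_p²`, are independent real random
variables whose laws have no atoms. -/
def MaskAssumption {Ω : Type*} [MeasurableSpace Ω] (P : Measure Ω) (p : ℕ)
    (φ : ℤ × ℤ → Ω → ℝ) : Prop :=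
  (∀ m, Measurable (φ m)) ∧
  iIndepFun (fun m : {m : ℤ × ℤ // m ∈ Zf2 p} => φ m.1) P ∧
  ∀ m ∈ Zf2 p, ∀ r : ℝ, P {ω | φ m ω = r} = 0

/-- The uniform random phase mask: independent phases, uniformly distributed on `[0,2π)`. -/
def UniformMask {Ω : Type*} [MeasurableSpace Ω] (P : Measure Ω) (p : ℕ)
    (φ : ℤ × ℤ → Ω → ℝ) : Prop :=
  (∀ m, Measurable (φ m)) ∧
  iIndepFun (fun m : {m : ℤ × ℤ // m ∈ Zf2 p} => φ m.1) P ∧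
  ∀ m ∈ Zf2 p,
    P.map (φ m) = (ENNReal.ofReal (2 * Real.pi))⁻¹ • volume.restrict (Set.Ico 0 (2 * Real.pi))

/-- The representative of `x` modulo `p` lying in `Z_p` (for odd `p`). -/
def zmodRep (p : ℕ) (x : ℤ) : ℤ := (x + ((p : ℤ) - 1) / 2) % (p : ℤ) - ((p : ℤ) - 1) / 2

/-- `p`-periodic extension to `ℤ²` of a function on `Z_p²`. -/
def perExt (p : ℕ) (h : ℤ × ℤ → ℂ) (m : ℤ × ℤ) : ℂ := h (zmodRep p m.1, zmodRep p m.2)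

/-- A function on `ℤ²` is supported on a line. -/
def SuppOnLine (h : ℤ × ℤ → ℂ) : Prop :=
  ∃ a b : ℝ × ℝ, ∀ m : ℤ × ℤ, h m ≠ 0 →
    ∃ s : ℝ, ((m.1 : ℝ), (m.2 : ℝ)) = (a.1 + s * b.1, a.2 + s * b.2)

/-- The diversity condition for a family of slope pairs. -/
def Diversity (n : ℕ) (α β : Fin n → ℝ) : Prop :=
  (∀ l, |α l| < 1 ∧ |β l| < 1) ∧
  ∀ ξη : ℤ × ℤ, ξη ∈ Zf2 (2 * n - 1) → ξη ≠ (0, 0) →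
    ∀ l l' : Fin n, l ≠ l' →
      ¬ ∃ z : ℤ,
        α l * (ξη.1 : ℝ) + β l * (ξη.2 : ℝ) - (α l' * (ξη.1 : ℝ) + β l' * (ξη.2 : ℝ))
          = (z : ℝ) * (((2 * n - 1 : ℕ) : ℝ))

/-- `exp(2πi t/(2n-1))`. -/
def ep (n : ℕ) (t : ℝ) : ℂ :=
  Complex.exp (2 * (Real.pi : ℂ) * Complex.I * (t : ℂ) / ((2*n-1 : ℕ) : ℂ))

section basic
variable {n : ℕ} (hn1 : 1 ≤ n)

lemma pz (hn1 : 1 ≤ n) : ((2*n-1 : ℕ) : ℤ) = 2*(n:ℤ)-1 := by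
  push_cast [Nat.cast_sub (by omega : 1 ≤ 2*n)]; ring

lemma pc_ne (hn1 : 1 ≤ n) : ((2*n-1 : ℕ) : ℂ) ≠ 0 := by
  simp only [ne_eq, Nat.cast_eq_zero]
  omega

lemma Zf_p_eq (hn1 : 1 ≤ n) : Zf (2*n-1) = Finset.Icc (-((n:ℤ)-1)) ((n:ℤ)-1) := by
  unfold Zf
  rw [pz hn1]
  have h : (2*(n:ℤ)-1-1)/2 = (n:ℤ)-1 := by omega
  rw [h]

lemma Zf_subset (hn1 : 1 ≤ n) : Zf n ⊆ Zf (2*n-1) := by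
  intro x hx
  rw [Zf_p_eq hn1]
  unfold Zf at hx
  simp only [Finset.mem_Icc] at *
  omega

lemma mem_Zf_p_abs (hn1 : 1 ≤ n) {x : ℤ} (hx : x ∈ Zf (2*n-1)) : |x| ≤ (n:ℤ)-1 := by
  rw [Zf_p_eq hn1, Finset.mem_Icc] at hx; rw [abs_le]; omega

lemma zero_mem_Zf_p (hn1 : 1 ≤ n) : (0:ℤ) ∈ Zf (2*n-1) := by
  rw [Zf_p_eq hn1, Finset.mem_Icc]; omega

lemma ep_add (n : ℕ) (s t : ℝ) : ep n (s + t) = ep n s * ep n t := by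
  unfold ep
  rw [← Complex.exp_add]
  congr 1
  push_cast
  ring

lemma ep_zero (n : ℕ) : ep n 0 = 1 := by
  simp [ep]

lemma ep_ne_zero (n : ℕ) (t : ℝ) : ep n t ≠ 0 := Complex.exp_ne_zero _

lemma ep_int_mul (n : ℕ) (m : ℤ) (t : ℝ) : ep n ((m:ℝ) * t) = (ep n t) ^ m := by
  unfold ep
  rw [← Complex.exp_int_mul]
  congr 1
  push_cast
  ring

/-- orthogonality of characters over `Z_p`. -/
lemma sumExp (hn1 : 1 ≤ n) (x : ℤ) :
    ∑ l ∈ Zf (2*n-1), ep n ((l : ℝ) * (x : ℝ)) =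
      if ((2*n-1 : ℕ) : ℤ) ∣ x then ((2*n-1 : ℕ) : ℂ) else 0 := by
  have hpz := pz hn1
  have hpc := pc_ne hn1
  by_cases hdvd : ((2*n-1 : ℕ) : ℤ) ∣ x
  · obtain ⟨m, rfl⟩ := hdvd
    rw [if_pos ⟨m, rfl⟩]
    have h1 : ∀ l ∈ Zf (2*n-1), ep n ((l : ℝ) * ((((2*n-1:ℕ):ℤ) * m : ℤ) : ℝ)) = 1 := by
      intro l _
      unfold ep
      rw [show 2 * (Real.pi : ℂ) * Complex.I * (((l : ℝ) * ((((2*n-1:ℕ):ℤ) * m : ℤ) : ℝ) : ℝ) : ℂ) / ((2*n-1 : ℕ) : ℂ)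
          = ((l * m : ℤ) : ℂ) * (2 * (Real.pi : ℂ) * Complex.I) by
        rw [div_eq_iff hpc]; push_cast; ring]
      exact Complex.exp_int_mul_two_pi_mul_I _
    rw [Finset.sum_congr rfl h1, Finset.sum_const, nsmul_eq_mul, mul_one]
    rw [Zf_p_eq hn1, Int.card_Icc]
    have : ((n:ℤ)-1 + 1 - -((n:ℤ)-1)) = ((2*n-1:ℕ):ℤ) := by omega
    rw [this]
    simp
  · rw [if_neg hdvd]
    set ω : ℂ := ep n (x : ℝ) with hω
    have hterm : ∀ l ∈ Zf (2*n-1), ep n ((l : ℝ) * (x : ℝ)) = ω ^ (l : ℤ) := by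
      intro l _; exact ep_int_mul n l (x:ℝ)
    rw [Finset.sum_congr rfl hterm]
    have hω0 : ω ≠ 0 := ep_ne_zero n _
    have hω1 : ω ≠ 1 := by
      intro h
      rw [hω] at h
      unfold ep at h
      rw [Complex.exp_eq_one_iff] at h
      obtain ⟨m, hm⟩ := h
      apply hdvd
      refine ⟨m, ?_⟩
      rw [div_eq_iff hpc] at hm
      have h2 : (2 * (Real.pi:ℂ) * Complex.I) ≠ 0 := by
        simp [Real.pi_ne_zero, Complex.I_ne_zero]
      have : ((x:ℤ):ℂ) = ((((2*n-1:ℕ):ℤ) * m : ℤ) : ℂ) := by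
        apply mul_left_cancel₀ h2
        push_cast at hm ⊢
        linear_combination hm
      exact_mod_cast this
    have hωp : ω ^ (2*n-1 : ℕ) = 1 := by
      rw [hω]
      unfold ep
      rw [← Complex.exp_nat_mul]
      rw [show ((2*n-1:ℕ):ℂ) * (2 * (Real.pi : ℂ) * Complex.I * ((x:ℝ):ℂ) / ((2*n-1 : ℕ) : ℂ))
          = ((x:ℤ):ℂ) * (2 * (Real.pi : ℂ) * Complex.I) by
        rw [mul_div_assoc', mul_comm, mul_div_assoc, div_self hpc, mul_one]; push_cast; ring]
      exact Complex.exp_int_mul_two_pi_mul_I _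
    -- reindex to range
    have hre : ∑ l ∈ Zf (2*n-1), ω ^ (l:ℤ)
        = ∑ m ∈ Finset.range (2*n-1), ω ^ (-((n:ℤ)-1)) * ω ^ m := by
      rw [Zf_p_eq hn1]
      refine Finset.sum_nbij' (fun l => (l + ((n:ℤ)-1)).toNat) (fun m => (m : ℤ) - ((n:ℤ)-1))
        ?_ ?_ ?_ ?_ ?_
      · intro a ha
        simp only [Finset.mem_Icc] at ha
        simp only [Finset.mem_range]
        omega
      · intro a ha
        simp only [Finset.mem_range] at ha
        simp only [Finset.mem_Icc]
        omega
      · intro a ha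
        simp only [Finset.mem_Icc] at ha
        omega
      · intro a ha
        simp only [Finset.mem_range] at ha
        omega
      · intro a ha
        simp only [Finset.mem_Icc] at ha
        rw [← zpow_natCast ω, Int.toNat_of_nonneg (by omega), ← zpow_add₀ hω0]
        congr 1
        ring
    rw [hre, ← Finset.mul_sum, geom_sum_eq hω1, hωp]
    simp

end basic

section mid
variable {n : ℕ}

lemma Dk_eq_sum (t : ℝ) :
    Dk (2*n-1) t = ((2*n-1:ℕ):ℂ)⁻¹ * ∑ l ∈ Zf (2*n-1), ep n ((l:ℝ) * t) := by
  unfold Dk ep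
  congr 1
  apply Finset.sum_congr rfl
  intro l _
  congr 1
  push_cast
  ring

lemma Dk_int (hn1 : 1 ≤ n) (x : ℤ) (hx : |x| < ((2*n-1:ℕ):ℤ)) :
    Dk (2*n-1) ((x:ℤ):ℝ) = if x = 0 then 1 else 0 := by
  rw [Dk_eq_sum, sumExp hn1 x]
  by_cases h : x = 0
  · subst h; rw [if_pos (dvd_zero _), if_pos rfl, inv_mul_cancel₀ (pc_ne hn1)]
  · rw [if_neg h, if_neg (fun hd => h (Int.eq_zero_of_abs_lt_dvd hd hx)), mul_zero]

lemma Dk_delta (hn1 : 1 ≤ n) {a b : ℤ} (ha : a ∈ Zf (2*n-1)) (hb : b ∈ Zf (2*n-1)) :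
    Dk (2*n-1) ((a:ℝ) - (b:ℝ)) = if a = b then 1 else 0 := by
  have hcast : ((a:ℝ) - (b:ℝ)) = (((a - b : ℤ)):ℝ) := by push_cast; ring
  have h1 := abs_le.mp (mem_Zf_p_abs hn1 ha)
  have h2 := abs_le.mp (mem_Zf_p_abs hn1 hb)
  have hlt : |a - b| < ((2*n-1:ℕ):ℤ) := by rw [pz hn1, abs_lt]; omega
  rw [hcast, Dk_int hn1 _ hlt]
  simp [sub_eq_zero]

lemma sum_delta (hn1 : 1 ≤ n) (A : ℤ → ℂ) (hA : ∀ x, x ∉ Zf n → A x = 0)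
    {a : ℤ} (ha : a ∈ Zf (2*n-1)) :
    ∑ i ∈ Zf n, A i * Dk (2*n-1) ((a:ℝ) - (i:ℝ)) = A a := by
  have h1 : ∀ i ∈ Zf n, A i * Dk (2*n-1) ((a:ℝ)-(i:ℝ)) = if a = i then A i else 0 := by
    intro i hi
    rw [Dk_delta hn1 ha (Zf_subset hn1 hi)]
    split <;> simp
  rw [Finset.sum_congr rfl h1, Finset.sum_ite_eq]
  split
  · rfl
  · exact (hA a (by assumption)).symm

lemma kernelSum (hn1 : 1 ≤ n) (t : ℝ) {η : ℤ} (hη : η ∈ Zf (2*n-1)) :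
    ∑ c ∈ Zf (2*n-1), Dk (2*n-1) (t + (c:ℝ)) * ep n (-((η:ℝ) * (c:ℝ)))
      = ep n ((η:ℝ) * t) := by
  have hterm : ∀ c ∈ Zf (2*n-1), Dk (2*n-1) (t + (c:ℝ)) * ep n (-((η:ℝ) * (c:ℝ)))
      = ∑ l ∈ Zf (2*n-1), ((2*n-1:ℕ):ℂ)⁻¹ * (ep n ((l:ℝ)*t) * ep n ((c:ℝ)*(((l - η : ℤ)):ℝ))) := by
    intro c _
    rw [Dk_eq_sum, mul_assoc, Finset.sum_mul, Finset.mul_sum]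
    apply Finset.sum_congr rfl
    intro l _
    congr 1
    rw [← ep_add, ← ep_add]
    congr 1
    push_cast
    ring
  rw [Finset.sum_congr rfl hterm, Finset.sum_comm]
  have h2 : ∀ l ∈ Zf (2*n-1),
      (∑ c ∈ Zf (2*n-1), ((2*n-1:ℕ):ℂ)⁻¹ * (ep n ((l:ℝ)*t) * ep n ((c:ℝ)*(((l - η : ℤ)):ℝ))))
        = if l = η then ep n ((η:ℝ)*t) else 0 := by
    intro l hl
    rw [← Finset.mul_sum, ← Finset.mul_sum, sumExp hn1 (l - η)]
    by_cases hlη : l = η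
    · subst hlη
      rw [if_pos (by simp), if_pos rfl, mul_comm, mul_assoc, mul_inv_cancel₀ (pc_ne hn1), mul_one]
    · have h1 := abs_le.mp (mem_Zf_p_abs hn1 hl)
      have h2 := abs_le.mp (mem_Zf_p_abs hn1 hη)
      rw [if_neg, if_neg hlη, mul_zero, mul_zero]
      intro hd
      exact hlη (by have := Int.eq_zero_of_abs_lt_dvd hd (by rw [pz hn1, abs_lt]; omega); omega)
  rw [Finset.sum_congr rfl h2, Finset.sum_ite_eq', if_pos hη]

lemma interp_eq (hn1 : 1 ≤ n) (f : ℤ → ℤ → ℤ → ℂ) {i : ℤ} (hi : i ∈ Zf n) (y z : ℝ) :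
    interp n f (i:ℝ) y z
      = ∑ j ∈ Zf n, ∑ k ∈ Zf n, f i j k * Dk (2*n-1) (y - (j:ℝ)) * Dk (2*n-1) (z - (k:ℝ)) := by
  unfold interp
  rw [Finset.sum_eq_single i]
  · apply Finset.sum_congr rfl; intro j _; apply Finset.sum_congr rfl; intro k _
    rw [Dk_delta hn1 (Zf_subset hn1 hi) (Zf_subset hn1 hi), if_pos rfl, mul_one]
  · intro b hb hbi
    apply Finset.sum_eq_zero; intro j _
    apply Finset.sum_eq_zero; intro k _
    rw [Dk_delta hn1 (Zf_subset hn1 hi) (Zf_subset hn1 hb), if_neg (fun h => hbi h.symm)]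
    ring
  · intro h; exact absurd hi h

lemma double_delta (hn1 : 1 ≤ n) (u : ℤ → ℤ → ℂ)
    (hu : ∀ j k, j ∉ Zf n ∨ k ∉ Zf n → u j k = 0)
    {a b : ℤ} (ha : a ∈ Zf (2*n-1)) (hb : b ∈ Zf (2*n-1)) :
    ∑ j ∈ Zf n, ∑ k ∈ Zf n,
      u j k * Dk (2*n-1) ((a:ℝ) - (j:ℝ)) * Dk (2*n-1) ((b:ℝ) - (k:ℝ)) = u a b := by
  have h1 : ∀ j ∈ Zf n,
      (∑ k ∈ Zf n, u j k * Dk (2*n-1) ((a:ℝ) - (j:ℝ)) * Dk (2*n-1) ((b:ℝ) - (k:ℝ)))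
        = u j b * Dk (2*n-1) ((a:ℝ) - (j:ℝ)) := by
    intro j _
    exact sum_delta hn1 (fun k => u j k * Dk (2*n-1) ((a:ℝ) - (j:ℝ)))
      (fun k hk => by rw [hu j k (Or.inr hk), zero_mul]) hb
  rw [Finset.sum_congr rfl h1]
  exact sum_delta hn1 (fun j => u j b) (fun j hj => hu j b (Or.inl hj)) ha

lemma interp_int (hn1 : 1 ≤ n) (f : ℤ → ℤ → ℤ → ℂ) (hf : IsObj n f)
    {a b c : ℤ} (ha : a ∈ Zf (2*n-1)) (hb : b ∈ Zf (2*n-1)) (hc : c ∈ Zf (2*n-1)) :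
    interp n f (a:ℝ) (b:ℝ) (c:ℝ) = f a b c := by
  unfold interp
  have h1 : ∀ i ∈ Zf n,
      (∑ j ∈ Zf n, ∑ k ∈ Zf n,
        f i j k * Dk (2*n-1) ((a:ℝ) - (i:ℝ)) * Dk (2*n-1) ((b:ℝ) - (j:ℝ)) *
          Dk (2*n-1) ((c:ℝ) - (k:ℝ)))
        = f i b c * Dk (2*n-1) ((a:ℝ) - (i:ℝ)) := by
    intro i _
    exact double_delta hn1 (fun j k => f i j k * Dk (2*n-1) ((a:ℝ) - (i:ℝ)))
      (fun j k hjk => by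
        rcases hjk with hj | hk
        · rw [hf i j k (Or.inr (Or.inl hj)), zero_mul]
        · rw [hf i j k (Or.inr (Or.inr hk)), zero_mul]) hb hc
  rw [Finset.sum_congr rfl h1]
  exact sum_delta hn1 (fun i => f i b c) (fun i hi => hf i b c (Or.inl hi)) ha

lemma proj_dz00 (hn1 : 1 ≤ n) (f : ℤ → ℤ → ℤ → ℂ) (hf : IsObj n f)
    {c : ℤ × ℤ} (hc : c ∈ Zf2 (2*n-1)) :
    proj n f (Dir.dz 0 0) c = ∑ k ∈ Zf n, f c.1 c.2 k := by
  obtain ⟨hc1, hc2⟩ := Finset.mem_product.mp hc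
  simp only [proj, if_pos hc]
  apply Finset.sum_congr rfl
  intro k hk
  rw [show (0:ℝ) * (k:ℝ) + (c.1:ℝ) = ((c.1:ℤ):ℝ) by push_cast; ring,
      show (0:ℝ) * (k:ℝ) + (c.2:ℝ) = ((c.2:ℤ):ℝ) by push_cast; ring]
  exact interp_int hn1 f hf hc1 hc2 (Zf_subset hn1 hk)

lemma interp_sub (f g : ℤ → ℤ → ℤ → ℂ) (x y z : ℝ) :
    interp n (fun i j k => g i j k - f i j k) x y z
      = interp n g x y z - interp n f x y z := by
  unfold interp
  simp only [sub_mul, Finset.sum_sub_distrib]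

lemma proj_sub (f g : ℤ → ℤ → ℤ → ℂ) (t : Dir) (c : ℤ × ℤ) :
    proj n (fun i j k => g i j k - f i j k) t c = proj n g t c - proj n f t c := by
  cases t <;> simp only [proj] <;> split <;>
    simp [interp_sub, Finset.sum_sub_distrib]

end mid


section fourier
variable {n : ℕ}

lemma F_dx (hn1 : 1 ≤ n) (f : ℤ → ℤ → ℤ → ℂ) (α β : ℝ) {η ζ : ℤ}
    (hη : η ∈ Zf (2*n-1)) (hζ : ζ ∈ Zf (2*n-1)) :
    ∑ c ∈ Zf2 (2*n-1), proj n f (Dir.dx α β) c * ep n (-((η:ℝ) * (c.1:ℝ) + (ζ:ℝ) * (c.2:ℝ)))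
      = ∑ i ∈ Zf n, ep n ((α * (η:ℝ) + β * (ζ:ℝ)) * (i:ℝ)) *
          (∑ j ∈ Zf n, ∑ k ∈ Zf n, f i j k * ep n (-((η:ℝ)*(j:ℝ) + (ζ:ℝ)*(k:ℝ)))) := by
  have hkey : ∀ t u : ℝ, (∑ c ∈ Zf2 (2*n-1),
      (Dk (2*n-1) (t + (c.1:ℝ)) * ep n (-((η:ℝ) * (c.1:ℝ)))) *
      (Dk (2*n-1) (u + (c.2:ℝ)) * ep n (-((ζ:ℝ) * (c.2:ℝ)))))
      = ep n ((η:ℝ) * t) * ep n ((ζ:ℝ) * u) := by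
    intro t u
    rw [show Zf2 (2*n-1) = Zf (2*n-1) ×ˢ Zf (2*n-1) from rfl, Finset.sum_product]
    dsimp only
    rw [← Finset.sum_mul_sum]
    rw [kernelSum hn1 t hη, kernelSum hn1 u hζ]
  calc
    ∑ c ∈ Zf2 (2*n-1), proj n f (Dir.dx α β) c * ep n (-((η:ℝ) * (c.1:ℝ) + (ζ:ℝ) * (c.2:ℝ)))
      = ∑ c ∈ Zf2 (2*n-1), ∑ i ∈ Zf n, ∑ j ∈ Zf n, ∑ k ∈ Zf n,
          f i j k * ((Dk (2*n-1) ((α*(i:ℝ) - (j:ℝ)) + (c.1:ℝ)) * ep n (-((η:ℝ) * (c.1:ℝ)))) *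
            (Dk (2*n-1) ((β*(i:ℝ) - (k:ℝ)) + (c.2:ℝ)) * ep n (-((ζ:ℝ) * (c.2:ℝ))))) := by
      apply Finset.sum_congr rfl
      intro c hcmem
      simp only [proj, if_pos hcmem]
      rw [Finset.sum_mul]
      refine Finset.sum_congr rfl fun i hi => ?_
      rw [interp_eq hn1 f hi, Finset.sum_mul]
      refine Finset.sum_congr rfl fun j hj => ?_
      rw [Finset.sum_mul]
      refine Finset.sum_congr rfl fun k hk => ?_
      rw [show α*(i:ℝ) + (c.1:ℝ) - (j:ℝ) = (α*(i:ℝ) - (j:ℝ)) + (c.1:ℝ) from by ring,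
          show β*(i:ℝ) + (c.2:ℝ) - (k:ℝ) = (β*(i:ℝ) - (k:ℝ)) + (c.2:ℝ) from by ring,
          show -((η:ℝ)*(c.1:ℝ) + (ζ:ℝ)*(c.2:ℝ)) = -((η:ℝ)*(c.1:ℝ)) + -((ζ:ℝ)*(c.2:ℝ)) from by ring,
          ep_add]
      ring
    _ = ∑ i ∈ Zf n, ∑ j ∈ Zf n, ∑ k ∈ Zf n, ∑ c ∈ Zf2 (2*n-1),
          f i j k * ((Dk (2*n-1) ((α*(i:ℝ) - (j:ℝ)) + (c.1:ℝ)) * ep n (-((η:ℝ) * (c.1:ℝ)))) *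
            (Dk (2*n-1) ((β*(i:ℝ) - (k:ℝ)) + (c.2:ℝ)) * ep n (-((ζ:ℝ) * (c.2:ℝ))))) := by
      rw [Finset.sum_comm]
      refine Finset.sum_congr rfl fun i _ => ?_
      rw [Finset.sum_comm]
      refine Finset.sum_congr rfl fun j _ => ?_
      rw [Finset.sum_comm]
    _ = ∑ i ∈ Zf n, ∑ j ∈ Zf n, ∑ k ∈ Zf n,
          f i j k * (ep n ((η:ℝ) * (α*(i:ℝ) - (j:ℝ))) * ep n ((ζ:ℝ) * (β*(i:ℝ) - (k:ℝ)))) := by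
      refine Finset.sum_congr rfl fun i _ => Finset.sum_congr rfl fun j _ =>
        Finset.sum_congr rfl fun k _ => ?_
      rw [← Finset.mul_sum, hkey (α*(i:ℝ) - (j:ℝ)) (β*(i:ℝ) - (k:ℝ))]
    _ = ∑ i ∈ Zf n, ep n ((α * (η:ℝ) + β * (ζ:ℝ)) * (i:ℝ)) *
          (∑ j ∈ Zf n, ∑ k ∈ Zf n, f i j k * ep n (-((η:ℝ)*(j:ℝ) + (ζ:ℝ)*(k:ℝ)))) := by
      refine Finset.sum_congr rfl fun i _ => ?_
      rw [Finset.mul_sum]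
      refine Finset.sum_congr rfl fun j _ => ?_
      rw [Finset.mul_sum]
      refine Finset.sum_congr rfl fun k _ => ?_
      rw [← ep_add, mul_left_comm, ← ep_add]
      congr 2
      push_cast
      ring

end fourier


section poly
variable {n : ℕ}

lemma mem_Zf_iff {m : ℕ} {x : ℤ} : x ∈ Zf m ↔ -(((m:ℤ)-1)/2) ≤ x ∧ x ≤ ((m:ℤ)-1)/2 := by
  simp [Zf, Finset.mem_Icc]

lemma zero_mem_Zf (hn1 : 1 ≤ n) : (0:ℤ) ∈ Zf n := by
  rw [mem_Zf_iff]
  constructor <;> omega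

lemma poly_step (hn1 : 1 ≤ n) (c : ℤ → ℂ) (v : ℂ) (w : Fin n → ℂ)
    (hw0 : ∀ l, w l ≠ 0) (hinj : Function.Injective w)
    (hsum : ∀ l, ∑ i ∈ Zf n, c i * (w l) ^ (i : ℤ) = v) :
    ∀ i ∈ Zf n, i ≠ 0 → c i = 0 := by
  set M : ℤ := ((n:ℤ)-1)/2 with hMdef
  have hM0 : 0 ≤ M := by rw [hMdef]; omega
  have hmem : ∀ i ∈ Zf n, -M ≤ i ∧ i ≤ M := fun i hi => mem_Zf_iff.mp hi
  set Q : Polynomial ℂ :=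
    (∑ i ∈ Zf n, Polynomial.C (c i) * Polynomial.X ^ ((i + M).toNat))
      - Polynomial.C v * Polynomial.X ^ (M.toNat) with hQ
  have heval : ∀ l : Fin n, Q.eval (w l) = 0 := by
    intro l
    simp only [hQ, Polynomial.eval_sub, Polynomial.eval_finset_sum, Polynomial.eval_mul,
      Polynomial.eval_C, Polynomial.eval_pow, Polynomial.eval_X]
    have h1 : ∀ i ∈ Zf n, c i * (w l) ^ ((i + M).toNat)
        = (c i * (w l) ^ (i:ℤ)) * (w l) ^ (M.toNat) := by
      intro i hi
      have h2 : ((i + M).toNat : ℤ) = i + M := Int.toNat_of_nonneg (by have := (hmem i hi).1; omega)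
      rw [← zpow_natCast (w l) ((i+M).toNat), h2, ← zpow_natCast (w l) (M.toNat),
          Int.toNat_of_nonneg hM0, zpow_add₀ (hw0 l), mul_assoc]
    rw [Finset.sum_congr rfl h1, ← Finset.sum_mul, hsum l,
        ← zpow_natCast (w l) (M.toNat), Int.toNat_of_nonneg hM0]
    ring
  have hdeg : Q.natDegree < n := by
    have hb : ∀ i ∈ Zf n, ((Polynomial.C (c i)) * Polynomial.X ^ ((i+M).toNat)).natDegree ≤ n - 1 := by
      intro i hi
      refine le_trans (Polynomial.natDegree_C_mul_le _ _) ?_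
      rw [Polynomial.natDegree_X_pow]
      have := (hmem i hi).2
      omega
    have h1 : (∑ i ∈ Zf n, Polynomial.C (c i) * Polynomial.X ^ ((i + M).toNat)).natDegree ≤ n - 1 :=
      Polynomial.natDegree_sum_le_of_forall_le _ _ hb
    have h2 : (Polynomial.C v * Polynomial.X ^ (M.toNat)).natDegree ≤ n - 1 := by
      refine le_trans (Polynomial.natDegree_C_mul_le _ _) ?_
      rw [Polynomial.natDegree_X_pow]
      omega
    have := Polynomial.natDegree_sub_le (∑ i ∈ Zf n, Polynomial.C (c i) * Polynomial.X ^ ((i + M).toNat))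
      (Polynomial.C v * Polynomial.X ^ (M.toNat))
    rw [hQ]
    omega
  have hQ0 : Q = 0 := by
    refine Polynomial.eq_zero_of_natDegree_lt_card_of_eval_eq_zero Q hinj heval ?_
    simpa using hdeg
  intro i0 hi0 hi0ne
  have hcoeff := congrArg (fun P => Polynomial.coeff P ((i0+M).toNat)) hQ0
  simp only [hQ, Polynomial.coeff_zero, Polynomial.coeff_sub, Polynomial.finset_sum_coeff,
    Polynomial.coeff_C_mul, Polynomial.coeff_X_pow] at hcoeff
  have hi0M := hmem i0 hi0
  rw [Finset.sum_eq_single i0] at hcoeff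
  · rw [if_pos rfl, if_neg, mul_one, mul_zero, sub_zero] at hcoeff
    · exact hcoeff
    · intro hEq
      apply hi0ne
      have h3 : ((i0+M).toNat : ℤ) = ((M.toNat : ℤ)) := by rw [hEq]
      rw [Int.toNat_of_nonneg (by omega), Int.toNat_of_nonneg hM0] at h3
      omega
  · intro b hb hbne
    rw [if_neg, mul_zero]
    intro hEq
    apply hbne
    have hbM := hmem b hb
    have h3 : ((i0+M).toNat : ℤ) = (((b+M).toNat : ℤ)) := by rw [hEq]
    rw [Int.toNat_of_nonneg (by omega), Int.toNat_of_nonneg (by omega)] at h3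
    omega
  · intro habs
    exact absurd hi0 habs

lemma sumExp_delta (hn1 : 1 ≤ n) {a b : ℤ} (ha : a ∈ Zf (2*n-1)) (hb : b ∈ Zf (2*n-1)) :
    ∑ η ∈ Zf (2*n-1), ep n ((η:ℝ) * ((a:ℝ) - (b:ℝ))) = if a = b then ((2*n-1:ℕ):ℂ) else 0 := by
  have hcast : ∀ η : ℤ, (η:ℝ) * ((a:ℝ) - (b:ℝ)) = (η:ℝ) * (((a - b:ℤ)):ℝ) := by
    intro η; push_cast; ring
  rw [Finset.sum_congr rfl (fun η _ => by rw [hcast η]), sumExp hn1 (a - b)]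
  have h1 := abs_le.mp (mem_Zf_p_abs hn1 ha)
  have h2 := abs_le.mp (mem_Zf_p_abs hn1 hb)
  by_cases hab : a = b
  · subst hab; rw [if_pos (by simp), if_pos rfl]
  · rw [if_neg hab, if_neg]
    intro hd
    exact hab (by have := Int.eq_zero_of_abs_lt_dvd hd (by rw [pz hn1, abs_lt]; omega); omega)

lemma inversion (hn3 : 3 ≤ n) (u : ℤ → ℤ → ℂ)
    (hu : ∀ j k : ℤ, j ∉ Zf n ∨ k ∉ Zf n → u j k = 0)
    (h0 : ∀ η ζ : ℤ, η ∈ Zf (2*n-1) → ζ ∈ Zf (2*n-1) → ¬(η = 0 ∧ ζ = 0) →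
      ∑ j ∈ Zf n, ∑ k ∈ Zf n, u j k * ep n (-((η:ℝ)*(j:ℝ) + (ζ:ℝ)*(k:ℝ))) = 0) :
    ∀ j k : ℤ, u j k = 0 := by
  have hn1 : 1 ≤ n := by omega
  have key : ∀ j0 k0 : ℤ, j0 ∈ Zf (2*n-1) → k0 ∈ Zf (2*n-1) →
      (∑ w ∈ Zf2 (2*n-1),
        (∑ j ∈ Zf n, ∑ k ∈ Zf n, u j k * ep n (-((w.1:ℝ)*(j:ℝ) + (w.2:ℝ)*(k:ℝ)))) *
          ep n ((w.1:ℝ) * (j0:ℝ) + (w.2:ℝ) * (k0:ℝ)))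
      = u j0 k0 * (((2*n-1:ℕ):ℂ) * ((2*n-1:ℕ):ℂ)) := by
    intro j0 k0 hj0 hk0
    calc
      (∑ w ∈ Zf2 (2*n-1),
        (∑ j ∈ Zf n, ∑ k ∈ Zf n, u j k * ep n (-((w.1:ℝ)*(j:ℝ) + (w.2:ℝ)*(k:ℝ)))) *
          ep n ((w.1:ℝ) * (j0:ℝ) + (w.2:ℝ) * (k0:ℝ)))
        = ∑ w ∈ Zf2 (2*n-1), ∑ j ∈ Zf n, ∑ k ∈ Zf n,
            u j k * (ep n ((w.1:ℝ) * ((j0:ℝ) - (j:ℝ))) * ep n ((w.2:ℝ) * ((k0:ℝ) - (k:ℝ)))) := by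
        refine Finset.sum_congr rfl fun w _ => ?_
        rw [Finset.sum_mul]
        refine Finset.sum_congr rfl fun j _ => ?_
        rw [Finset.sum_mul]
        refine Finset.sum_congr rfl fun k _ => ?_
        rw [mul_assoc, ← ep_add, ← ep_add]
        congr 2
        ring
      _ = ∑ j ∈ Zf n, ∑ k ∈ Zf n, ∑ w ∈ Zf2 (2*n-1),
            u j k * (ep n ((w.1:ℝ) * ((j0:ℝ) - (j:ℝ))) * ep n ((w.2:ℝ) * ((k0:ℝ) - (k:ℝ)))) := by
        rw [Finset.sum_comm]
        refine Finset.sum_congr rfl fun j _ => ?_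
        rw [Finset.sum_comm]
      _ = ∑ j ∈ Zf n, ∑ k ∈ Zf n,
            u j k * ((if j0 = j then ((2*n-1:ℕ):ℂ) else 0) * (if k0 = k then ((2*n-1:ℕ):ℂ) else 0)) := by
        refine Finset.sum_congr rfl fun j hj => Finset.sum_congr rfl fun k hk => ?_
        rw [← Finset.mul_sum]
        congr 1
        rw [show Zf2 (2*n-1) = Zf (2*n-1) ×ˢ Zf (2*n-1) from rfl, Finset.sum_product]
        dsimp only
        rw [← Finset.sum_mul_sum]
        rw [sumExp_delta hn1 hj0 (Zf_subset hn1 hj), sumExp_delta hn1 hk0 (Zf_subset hn1 hk)]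
      _ = u j0 k0 * (((2*n-1:ℕ):ℂ) * ((2*n-1:ℕ):ℂ)) := by
        by_cases hj0n : j0 ∈ Zf n
        · by_cases hk0n : k0 ∈ Zf n
          · rw [Finset.sum_eq_single j0]
            · rw [Finset.sum_eq_single k0]
              · rw [if_pos rfl, if_pos rfl]
              · intro b _ hbne
                rw [if_neg (show ¬ k0 = b from fun h => hbne h.symm)]
                ring
              · intro habs; exact absurd hk0n habs
            · intro b _ hbne
              apply Finset.sum_eq_zero
              intro k _
              rw [if_neg (show ¬ j0 = b from fun h => hbne h.symm)]
              ring
            · intro habs; exact absurd hj0n habs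
          · rw [hu j0 k0 (Or.inr hk0n), zero_mul]
            apply Finset.sum_eq_zero; intro j _
            apply Finset.sum_eq_zero; intro k hk
            rw [if_neg (show ¬ k0 = k from fun h => hk0n (by rwa [h]))]
            ring
        · rw [hu j0 k0 (Or.inl hj0n), zero_mul]
          apply Finset.sum_eq_zero; intro j hj
          apply Finset.sum_eq_zero; intro k _
          rw [if_neg (show ¬ j0 = j from fun h => hj0n (by rwa [h]))]
          ring
  have eval1 : ∀ j0 k0 : ℤ,
      (∑ w ∈ Zf2 (2*n-1),
        (∑ j ∈ Zf n, ∑ k ∈ Zf n, u j k * ep n (-((w.1:ℝ)*(j:ℝ) + (w.2:ℝ)*(k:ℝ)))) *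
          ep n ((w.1:ℝ) * (j0:ℝ) + (w.2:ℝ) * (k0:ℝ)))
      = ∑ j ∈ Zf n, ∑ k ∈ Zf n, u j k := by
    intro j0 k0
    rw [Finset.sum_eq_single ((0:ℤ), (0:ℤ))]
    · simp [ep_zero]
    · intro w hw hwne
      obtain ⟨hw1, hw2⟩ := Finset.mem_product.mp hw
      rw [h0 w.1 w.2 hw1 hw2 (fun ⟨ha, hb⟩ => hwne (Prod.ext ha hb)), zero_mul]
    · intro habs
      exact absurd (Finset.mem_product.mpr ⟨zero_mem_Zf_p hn1, zero_mem_Zf_p hn1⟩) habs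
  have hS0 : (∑ j ∈ Zf n, ∑ k ∈ Zf n, u j k) = 0 := by
    have hmem : ((n:ℤ)-1) ∈ Zf (2*n-1) := by
      rw [Zf_p_eq hn1, Finset.mem_Icc]; omega
    have h1 := (key ((n:ℤ)-1) 0 hmem (zero_mem_Zf_p hn1)).symm.trans (eval1 ((n:ℤ)-1) 0)
    rw [hu ((n:ℤ)-1) 0 (Or.inl (by rw [mem_Zf_iff]; omega)), zero_mul] at h1
    exact h1.symm
  have hmain : ∀ j k : ℤ, j ∈ Zf n → k ∈ Zf n → u j k = 0 := by
    intro j k hj hk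
    have h1 := (key j k (Zf_subset hn1 hj) (Zf_subset hn1 hk)).symm.trans (eval1 j k)
    rw [hS0] at h1
    rcases mul_eq_zero.mp h1 with h2 | h2
    · exact h2
    · exact absurd h2 (mul_ne_zero (pc_ne hn1) (pc_ne hn1))
  intro j k
  by_cases hj : j ∈ Zf n
  · by_cases hk : k ∈ Zf n
    · exact hmain j k hj hk
    · exact hu j k (Or.inr hk)
  · exact hu j k (Or.inl hj)

end poly

lemma ep_inj_cond {n : ℕ} (hn1 : 1 ≤ n) {s t : ℝ} (hst : ep n s = ep n t) :
    ∃ z : ℤ, s - t = (z:ℝ) * ((2*n-1:ℕ):ℝ) := by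
  have hpc := pc_ne hn1
  have h1 : Complex.exp ((2*(Real.pi:ℂ)*Complex.I*(s:ℂ)/((2*n-1:ℕ):ℂ))
      - (2*(Real.pi:ℂ)*Complex.I*(t:ℂ)/((2*n-1:ℕ):ℂ))) = 1 := by
    rw [Complex.exp_sub]
    unfold ep at hst
    rw [hst, div_self (Complex.exp_ne_zero _)]
  obtain ⟨m, hm⟩ := Complex.exp_eq_one_iff.mp h1
  refine ⟨m, ?_⟩
  rw [div_sub_div_same, div_eq_iff hpc] at hm
  have h2 : (2*(Real.pi:ℂ)*Complex.I) ≠ 0 := by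
    simp [Real.pi_ne_zero, Complex.I_ne_zero]
  have h3 : ((s - t : ℝ):ℂ) = (((m:ℝ) * ((2*n-1:ℕ):ℝ) : ℝ):ℂ) := by
    apply mul_left_cancel₀ h2
    push_cast at hm ⊢
    linear_combination hm
  exact_mod_cast h3

/-- The 3D Itoh condition for `κ`: variation less than `π/κ` between adjacent grid points. -/
def Itoh (n : ℕ) (κ : ℝ) (f : ℤ → ℤ → ℤ → ℂ) : Prop :=
  ∀ i j k i' j' k' : ℤ,
    i ∈ Zf n → j ∈ Zf n → k ∈ Zf n → i' ∈ Zf n → j' ∈ Zf n → k' ∈ Zf n →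
    ((|i - i'| = 1 ∧ j = j' ∧ k = k') ∨ (i = i' ∧ |j - j'| = 1 ∧ k = k') ∨
      (i = i' ∧ j = j' ∧ |k - k'| = 1)) →
    ‖f i j k - f i' j' k'‖ < Real.pi / κ

/-- The common set `L_{t,t'}(f)` for directions `t = (α,β,1)` and `t' = (α',β',1)`. -/
def commonSet (n : ℕ) (f : ℤ → ℤ → ℤ → ℂ) (α β α' β' : ℝ) : Set ((ℝ × ℝ) × (ℝ × ℝ)) :=
  {kk | ft2 n (proj n f (Dir.dz α β)) kk.1.1 kk.1.2
      = ft2 n (proj n f (Dir.dz α' β')) kk.2.1 kk.2.2}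

/-- `k` has a slope (its first component is nonzero) which is not a fraction over `Z_p`. -/
def BadSlope (p : ℕ) (k : ℝ × ℝ) : Prop :=
  k.1 ≠ 0 ∧ ∀ a b : ℤ, a ∈ Zf p → b ∈ Zf p → b ≠ 0 → k.2 / k.1 ≠ (a : ℝ) / (b : ℝ)

/-- Sector condition: every nonzero value of `h` has phase angle in `[a, b]` (mod 2π). -/
def Sector (a b : ℝ) (h : ℤ × ℤ → ℂ) : Prop :=
  ∀ m : ℤ × ℤ, h m ≠ 0 →
    ∃ θ ∈ Set.Icc a b, h m = ((‖h m‖ : ℝ) : ℂ) * Complex.exp (Complex.I * (θ : ℂ))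

open scoped Classical in
/-- Number of points of `Z_p²` where `h` does not vanish. -/
def nnz (p : ℕ) (h : ℤ × ℤ → ℂ) : ℕ := ((Zf2 p).filter fun m => h m ≠ 0).card

/-- Uniqueness for 3D phase unwrapping (algebraic core). -/
theorem phase_unwrapping_unique
    (n : ℕ) (hn : Odd n) (hn3 : 3 ≤ n)
    (κ : ℝ) (hκ : 0 < κ)
    (f g : ℤ → ℤ → ℤ → ℂ) (hf : IsObj n f) (hg : IsObj n g)
    (hfI : Itoh n κ f) (hgI : Itoh n κ g)
    (α β : Fin n → ℝ) (hdiv : Diversity n α β)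
    (γ0 : ℝ) (hγ0 : |γ0| < 1)
    (T : Finset Dir)
    (hTx : ∀ l : Fin n, Dir.dx (α l) (β l) ∈ T)
    (hTy : Dir.dy 0 γ0 ∈ T)
    (hTz : Dir.dz 0 0 ∈ T)
    (ha : ∀ t ∈ T, ∀ m ∈ Zf2 (2 * n - 1),
      Complex.exp (Complex.I * (κ : ℂ) * proj n g t m)
        = Complex.exp (Complex.I * (κ : ℂ) * proj n f t m))
    (hb : ∀ t ∈ T, ∀ t' ∈ T, ∀ m ∈ Zf2 (2 * n - 1),
      proj n g t m - proj n f t m = proj n g t' m - proj n f t' m) :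
    ∀ i j k : ℤ, g i j k = f i j k := by
  have hn1 : 1 ≤ n := by omega
  set h : ℤ → ℤ → ℤ → ℂ := fun i j k => g i j k - f i j k with hh
  have hobj : IsObj n h := by
    intro i j k hm
    simp only [hh]
    rw [hf i j k hm, hg i j k hm, sub_self]
  have hpb : ∀ t ∈ T, ∀ t' ∈ T, ∀ m ∈ Zf2 (2*n-1), proj n h t m = proj n h t' m := by
    intro t ht t' ht' m hm
    rw [hh, proj_sub f g t m, proj_sub f g t' m]
    exact hb t ht t' ht' m hm
  have l0 : Fin n := ⟨0, by omega⟩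
  have h0mem : (0:ℤ) ∈ Zf n := zero_mem_Zf hn1
  -- Step 1: h vanishes off the slab i = 0
  have slab : ∀ i j k : ℤ, i ≠ 0 → h i j k = 0 := by
    intro i1 j1 k1 hi1
    by_cases hi1mem : i1 ∈ Zf n
    swap
    · exact hobj _ _ _ (Or.inl hi1mem)
    refine inversion hn3 (fun j k => h i1 j k)
      (fun j k hjk => hobj i1 j k (Or.inr hjk)) ?_ j1 k1
    intro η ζ hη hζ hne
    have hd2 := poly_step hn1
      (fun i => ∑ j ∈ Zf n, ∑ k ∈ Zf n, h i j k * ep n (-((η:ℝ)*(j:ℝ) + (ζ:ℝ)*(k:ℝ))))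
      (∑ c ∈ Zf2 (2*n-1), proj n h (Dir.dx (α l0) (β l0)) c *
        ep n (-((η:ℝ) * (c.1:ℝ) + (ζ:ℝ) * (c.2:ℝ))))
      (fun l => ep n (α l * (η:ℝ) + β l * (ζ:ℝ)))
      (fun l => ep_ne_zero n _) ?_ ?_ i1 hi1mem hi1
    · exact hd2
    · -- injectivity from diversity
      intro l l' hww
      by_contra hll
      refine hdiv.2 (η, ζ) (Finset.mem_product.mpr ⟨hη, hζ⟩) ?_ l l' hll ?_
      · intro hEq
        rw [Prod.ext_iff] at hEq
        exact hne ⟨hEq.1, hEq.2⟩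
      · obtain ⟨z, hz⟩ := ep_inj_cond hn1 hww
        exact ⟨z, hz⟩
    · -- the n slice values coincide
      intro l
      have e3 : ∀ i : ℤ, ep n ((α l * (η:ℝ) + β l * (ζ:ℝ)) * (i:ℝ))
          = ep n (α l * (η:ℝ) + β l * (ζ:ℝ)) ^ (i:ℤ) := by
        intro i
        rw [← ep_int_mul n i (α l * (η:ℝ) + β l * (ζ:ℝ))]
        congr 1
        ring
      calc
        ∑ i ∈ Zf n,
            (∑ j ∈ Zf n, ∑ k ∈ Zf n, h i j k * ep n (-((η:ℝ)*(j:ℝ) + (ζ:ℝ)*(k:ℝ)))) *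
              (ep n (α l * (η:ℝ) + β l * (ζ:ℝ))) ^ (i:ℤ)
            = ∑ i ∈ Zf n, ep n ((α l * (η:ℝ) + β l * (ζ:ℝ)) * (i:ℝ)) *
                (∑ j ∈ Zf n, ∑ k ∈ Zf n, h i j k * ep n (-((η:ℝ)*(j:ℝ) + (ζ:ℝ)*(k:ℝ)))) := by
          refine Finset.sum_congr rfl fun i _ => ?_
          rw [e3 i]
          exact mul_comm _ _
        _ = ∑ c ∈ Zf2 (2*n-1), proj n h (Dir.dx (α l) (β l)) c *
              ep n (-((η:ℝ)*(c.1:ℝ) + (ζ:ℝ)*(c.2:ℝ))) := (F_dx hn1 h (α l) (β l) hη hζ).symm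
        _ = ∑ c ∈ Zf2 (2*n-1), proj n h (Dir.dx (α l0) (β l0)) c *
              ep n (-((η:ℝ)*(c.1:ℝ) + (ζ:ℝ)*(c.2:ℝ))) := by
          refine Finset.sum_congr rfl fun c hc => ?_
          rw [hpb _ (hTx l) _ (hTx l0) c hc]
  -- Step 2: projection along the first diversity direction is the slice h 0 · ·
  have hdx0 : ∀ c ∈ Zf2 (2*n-1), proj n h (Dir.dx (α l0) (β l0)) c = h 0 c.1 c.2 := by
    intro c hc
    obtain ⟨hc1, hc2⟩ := Finset.mem_product.mp hc
    simp only [proj, if_pos hc]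
    rw [Finset.sum_congr rfl (fun i (hi : i ∈ Zf n) => interp_eq hn1 h hi _ _)]
    rw [Finset.sum_eq_single (0:ℤ)]
    · have e1 : ∀ j:ℤ, α l0 * ((0:ℤ):ℝ) + (c.1:ℝ) - (j:ℝ) = (c.1:ℝ) - (j:ℝ) := by
        intro j; push_cast; ring
      have e2 : ∀ k:ℤ, β l0 * ((0:ℤ):ℝ) + (c.2:ℝ) - (k:ℝ) = (c.2:ℝ) - (k:ℝ) := by
        intro k; push_cast; ring
      rw [Finset.sum_congr rfl (fun j _ => Finset.sum_congr rfl (fun k _ => by rw [e1 j, e2 k]))]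
      exact double_delta hn1 (fun j k => h 0 j k) (fun j k hjk => hobj 0 j k (Or.inr hjk)) hc1 hc2
    · intro b _ hbne
      apply Finset.sum_eq_zero; intro j _
      apply Finset.sum_eq_zero; intro k _
      rw [slab b j k hbne]
      ring
    · intro habs; exact absurd h0mem habs
  -- Step 3: support reduction to the origin
  have eq1 : ∀ c ∈ Zf2 (2*n-1), h 0 c.1 c.2 = ∑ k ∈ Zf n, h c.1 c.2 k := by
    intro c hc
    rw [← hdx0 c hc, ← proj_dz00 hn1 h hobj hc]
    exact hpb _ (hTx l0) _ hTz c hc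
  have hj0 : ∀ j k : ℤ, j ≠ 0 → h 0 j k = 0 := by
    intro j k hj
    by_cases hjn : j ∈ Zf n
    · by_cases hkn : k ∈ Zf n
      · have hc : ((j,k) : ℤ×ℤ) ∈ Zf2 (2*n-1) :=
          Finset.mem_product.mpr ⟨Zf_subset hn1 hjn, Zf_subset hn1 hkn⟩
        have h2 := (eq1 (j,k) hc).trans (Finset.sum_eq_zero fun k' _ => slab j k k' hj)
        simpa using h2
      · exact hobj 0 j k (Or.inr (Or.inr hkn))
    · exact hobj 0 j k (Or.inr (Or.inl hjn))
  have hk0 : ∀ k : ℤ, k ≠ 0 → h 0 0 k = 0 := by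
    intro k hk
    by_cases hkn : k ∈ Zf n
    · have hc : (((0:ℤ),k) : ℤ×ℤ) ∈ Zf2 (2*n-1) :=
        Finset.mem_product.mpr ⟨zero_mem_Zf_p hn1, Zf_subset hn1 hkn⟩
      have h2 := (eq1 (0,k) hc).trans (Finset.sum_eq_zero fun k' _ => hj0 k k' hk)
      simpa using h2
    · exact hobj 0 0 k (Or.inr (Or.inr hkn))
  -- Step 4: the origin value is a multiple of 2π/κ
  have hc00 : (((0:ℤ),(0:ℤ)) : ℤ×ℤ) ∈ Zf2 (2*n-1) :=
    Finset.mem_product.mpr ⟨zero_mem_Zf_p hn1, zero_mem_Zf_p hn1⟩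
  have hproj00 : proj n h (Dir.dz 0 0) (0,0) = h 0 0 0 := by
    rw [proj_dz00 hn1 h hobj hc00]
    rw [Finset.sum_eq_single (0:ℤ)]
    · intro b _ hbne
      exact hk0 b hbne
    · intro habs; exact absurd h0mem habs
  have hdiff : proj n g (Dir.dz 0 0) (0,0) - proj n f (Dir.dz 0 0) (0,0) = h 0 0 0 := by
    rw [← proj_sub f g (Dir.dz 0 0) (0,0), ← hh]
    exact hproj00
  obtain ⟨m, hm⟩ : ∃ m : ℤ, Complex.I * (κ:ℂ) * (h 0 0 0) = m * (2*(Real.pi:ℂ)*Complex.I) := by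
    have hE := ha (Dir.dz 0 0) hTz (0,0) hc00
    have hE1 : Complex.exp (Complex.I * (κ:ℂ) * proj n g (Dir.dz 0 0) (0,0)
        - Complex.I * (κ:ℂ) * proj n f (Dir.dz 0 0) (0,0)) = 1 := by
      rw [Complex.exp_sub, hE, div_self (Complex.exp_ne_zero _)]
    rw [show Complex.I * (κ:ℂ) * proj n g (Dir.dz 0 0) (0,0)
          - Complex.I * (κ:ℂ) * proj n f (Dir.dz 0 0) (0,0)
        = Complex.I * (κ:ℂ) * (proj n g (Dir.dz 0 0) (0,0) - proj n f (Dir.dz 0 0) (0,0))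
        from by ring, hdiff] at hE1
    exact Complex.exp_eq_one_iff.mp hE1
  have hκc : ((κ:ℝ):ℂ) ≠ 0 := Complex.ofReal_ne_zero.mpr (ne_of_gt hκ)
  have h000val : h 0 0 0 = ((2*Real.pi*(m:ℝ)/κ : ℝ):ℂ) := by
    have h2 : (Complex.I * (κ:ℂ)) ≠ 0 := mul_ne_zero Complex.I_ne_zero hκc
    apply mul_left_cancel₀ h2
    rw [hm]
    push_cast
    field_simp
  -- Step 5: Itoh condition kills the origin value
  have h1mem : (1:ℤ) ∈ Zf n := by rw [mem_Zf_iff]; omega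
  have hIf := hfI 0 0 0 1 0 0 h0mem h0mem h0mem h1mem h0mem h0mem
    (Or.inl ⟨by norm_num, rfl, rfl⟩)
  have hIg := hgI 0 0 0 1 0 0 h0mem h0mem h0mem h1mem h0mem h0mem
    (Or.inl ⟨by norm_num, rfl, rfl⟩)
  have h100 : h 1 0 0 = 0 := slab 1 0 0 one_ne_zero
  have hrw : h 0 0 0 = (g 0 0 0 - g 1 0 0) - (f 0 0 0 - f 1 0 0) := by
    simp only [hh] at h100 ⊢
    linear_combination h100
  have htri : ‖h 0 0 0‖ < Real.pi/κ + Real.pi/κ := by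
    rw [hrw]
    calc ‖(g 0 0 0 - g 1 0 0) - (f 0 0 0 - f 1 0 0)‖
        ≤ ‖g 0 0 0 - g 1 0 0‖ + ‖f 0 0 0 - f 1 0 0‖ := by
          simpa using norm_sub_le (g 0 0 0 - g 1 0 0) (f 0 0 0 - f 1 0 0)
      _ < Real.pi/κ + Real.pi/κ := add_lt_add hIg hIf
  have hm0 : m = 0 := by
    by_contra hmne
    have hm1 : (1:ℝ) ≤ |(m:ℝ)| := by
      rw [← Int.cast_abs]
      exact_mod_cast Int.one_le_abs (by omega)
    rw [h000val, Complex.norm_real, Real.norm_eq_abs] at htri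
    have habs2 : |2*Real.pi*(m:ℝ)/κ| = 2*Real.pi*|(m:ℝ)|/κ := by
      rw [abs_div, abs_mul, abs_of_pos (by positivity : (0:ℝ) < 2*Real.pi), abs_of_pos hκ]
    rw [habs2] at htri
    have hge : 2*Real.pi ≤ 2*Real.pi*|(m:ℝ)| := by nlinarith [Real.pi_pos]
    have hge2 : 2*Real.pi/κ ≤ 2*Real.pi*|(m:ℝ)|/κ := (div_le_div_iff_of_pos_right hκ).mpr hge
    have hsplit : 2*Real.pi/κ = Real.pi/κ + Real.pi/κ := by ring
    linarith
  rw [hm0] at h000val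
  have h000 : h 0 0 0 = 0 := by
    rw [h000val]
    norm_num
  -- Conclusion
  intro i j k
  have hzero : h i j k = 0 := by
    rcases eq_or_ne i 0 with rfl | hi
    · rcases eq_or_ne j 0 with rfl | hj
      · rcases eq_or_ne k 0 with rfl | hk
        · exact h000
        · exact hk0 k hk
      · exact hj0 j k hj
    · exact slab i j k hi
  simp only [hh] at hzero
  exact sub_eq_zero.mp hzero


end Tomo3D
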